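/- arXiv:2103.12387 — 6 statements merged into one kernel-verified Lean document; each statement's English description precedes it below -/
import Mathlib

section
/- Let X be a set with a binary operation d and element 0 such that d(x,0)=x and d(x,x)=0 for all x. If moreover d(d(x,z),d(y,z))=d(x,y) for all x,y,z, then the operation x∘y := d(x,d(0,y)) makes X into a group with identity 0, in which the inverse of x is d(0,x) and d(x,y)=x∘(d(0,y)) is the difference mapping, i.e. d(x,y)∘y = x. -/
/-- A subtraction `d` with `d x 0 = x`, `d x x = 0` satisfying the cocycle identity
`d (d x z) (d y z) = d x y` yields a group structure `x ∘ y := d x (d 0 y)` with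
identity `0`, inverse `d 0 x`, and `d` as difference mapping: `d x y ∘ y = x`. -/
theorem stmt_0 {X : Type*} (d : X → X → X) (zero : X)
    (h1 : ∀ x, d x zero = x) (h2 : ∀ x, d x x = zero)
    (h3 : ∀ x y z, d (d x z) (d y z) = d x y) :
    (∀ x y z, d x (d zero (d y (d zero z))) = d (d x (d zero y)) (d zero z)) ∧
    (∀ x, d x (d zero zero) = x) ∧
    (∀ x, d zero (d zero x) = x) ∧
    (∀ x, d x (d zero (d zero x)) = zero) ∧
    (∀ x, d (d zero x) (d zero x) = zero) ∧
    (∀ x y, d (d x y) (d zero y) = x) := by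
  have key6 : ∀ x y, d (d x y) (d zero y) = x := fun x y => (h3 x zero y).trans (h1 x)
  have L : ∀ x, d zero (d zero x) = x := by
    intro x
    have := h3 x zero x
    rw [h2 x, h1 x] at this
    exact this
  have P : ∀ x y z, d x (d y z) = d (d x (d zero z)) y := by
    intro x y z
    have := h3 x (d y z) (d zero z)
    rw [key6 y z] at this
    exact this.symm
  refine ⟨?_, ?_, L, ?_, fun x => h2 _, key6⟩
  · intro x y z
    rw [P zero y (d zero z), L, P x (d zero z) y]
  · intro x
    rw [h1 zero, h1 x]
  · intro x
    rw [L x, h2 x]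
end

section
/- Let X be a set with a ternary operation p. Define, for a function f:X→Y with section s (f∘s=id), the binary operation on the set R[f]={(u,v):f(u)=f(v)} by d((u,v)) = p(u,v,s(f(u))). Then p satisfies the Mal'tsev identities p(x,y,y)=x and p(y,y,x)=x for all x,y if and only if for every split epimorphism of sets (f,s), the operation d is a subtraction on R[f] fibered over X, i.e. d(u,u)=s f(u) and d(u,s f(u))=u for all u, v with f(u)=f(v). -/
/-- A ternary operation `p` with `p x x x = x` satisfies the Mal'tsev identities iff,
for every split epimorphism of sets `(f, s)`, the operation
`d (u,v) = p u v (s (f u))` is a subtraction on the kernel pair `R[f]` fibered over `X`,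
i.e. `d (u,u) = s (f u)` and `d (u, s (f u)) = u`. -/
theorem stmt_5 {X : Type} (p : X → X → X → X) (hid : ∀ x, p x x x = x) :
    (∀ x y : X, p x y y = x ∧ p y y x = x) ↔
      (∀ (Y : Type) (f : X → Y) (s : Y → X), (∀ y, f (s y) = y) →
        ∀ u v : X, f u = f v →
          p u u (s (f u)) = s (f u) ∧ p u (s (f u)) (s (f u)) = u) := by
  constructor
  · intro h Y f s hs u v huv
    exact ⟨(h (s (f u)) u).2, (h u (s (f u))).1⟩
  · intro h x y
    have h1 := h Unit (fun _ => ()) (fun _ => y) (fun _ => rfl)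
    have h2 := h Unit (fun _ => ()) (fun _ => x) (fun _ => rfl)
    exact ⟨(h1 x x rfl).2, (h2 y y rfl).1⟩
end

section
/- Let V be a pointed algebraic structure (carrier X, constant 0) equipped with a binary operation ∘ and a unary operation υ satisfying a∘0 = 0∘a and υ(a∘0)=a for all a. Given sets A, Z and a subset W ⊆ A×Z closed under the componentwise operations (with componentwise ∘ and υ and containing (0,0)), such that (a,0)∈W for all a with (a,z)∈W for some z, and (0,z)∈W for all z with (a,z)∈W for some a; let T be an equivalence relation on W compatible with ∘ and υ (a congruence). If (0,b) T (0,c), then for every a with (a,b)∈W and (a,c)∈W we have (a,b) T (a,c). -/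
/-- In a pointed variety with a binary `∘` and unary `υ` satisfying `a∘0 = 0∘a` and
`υ (a∘0) = a`, any congruence `T` on a punctual relation `W ⊆ A × Z` satisfies:
if `(0,b) T (0,c)` then `(a,b) T (a,c)` whenever both pairs lie in `W`. -/
theorem stmt_7 {A Z : Type*}
    (mulA : A → A → A) (upA : A → A) (zA : A)
    (mulZ : Z → Z → Z) (upZ : Z → Z) (zZ : Z)
    (hA1 : ∀ a, mulA a zA = mulA zA a) (hA2 : ∀ a, upA (mulA a zA) = a)
    (hZ1 : ∀ z, mulZ z zZ = mulZ zZ z) (hZ2 : ∀ z, upZ (mulZ z zZ) = z)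
    (W : A → Z → Prop)
    (hW0 : W zA zZ)
    (hWmul : ∀ a z a' z', W a z → W a' z' → W (mulA a a') (mulZ z z'))
    (hWup : ∀ a z, W a z → W (upA a) (upZ z))
    (hWl : ∀ a z, W a z → W a zZ)
    (hWr : ∀ a z, W a z → W zA z)
    (T : A × Z → A × Z → Prop) (hTeq : Equivalence T)
    (hTmul : ∀ u u' v v', T u u' → T v v' →
      T (mulA u.1 v.1, mulZ u.2 v.2) (mulA u'.1 v'.1, mulZ u'.2 v'.2))
    (hTup : ∀ u u', T u u' → T (upA u.1, upZ u.2) (upA u'.1, upZ u'.2))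
    (a : A) (b c : Z)
    (hT : T (zA, b) (zA, c)) (hab : W a b) (hac : W a c) :
    T (a, b) (a, c) := by
  have h1 := hTmul (a, zZ) (a, zZ) (zA, b) (zA, c) (hTeq.refl _) hT
  have h2 := hTup _ _ h1
  simpa [hA2, ← hZ1, hZ2] using h2
end

section
/- Let V be a pointed algebraic structure (carrier X, constant 0) with a binary operation d and a unary operation ε satisfying d(a,a)=0 and ε(d(a,0))=a for all a. Given a punctual relation W ⊆ A×Z between two algebras (closed under componentwise operations, containing (a,0) and (0,z) whenever appropriate) and a congruence T on W: if (a,b) T (a,c) then (0,b) T (0,c). -/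
/-- In a pointed variety with a binary `d` and unary `ε` satisfying `d a a = 0` and
`ε (d a 0) = a`, any congruence `T` on a punctual relation `W ⊆ A × Z` satisfies:
if `(a,b) T (a,c)` then `(0,b) T (0,c)`. -/
theorem stmt_8 {A Z : Type*}
    (dA : A → A → A) (eA : A → A) (zA : A)
    (dZ : Z → Z → Z) (eZ : Z → Z) (zZ : Z)
    (hA1 : ∀ a, dA a a = zA) (hA2 : ∀ a, eA (dA a zA) = a)
    (hZ1 : ∀ z, dZ z z = zZ) (hZ2 : ∀ z, eZ (dZ z zZ) = z)
    (W : A → Z → Prop)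
    (hW0 : W zA zZ)
    (hWl : ∀ a z, W a z → W a zZ)
    (hWr : ∀ a z, W a z → W zA z)
    (hWd : ∀ a z a' z', W a z → W a' z' → W (dA a a') (dZ z z'))
    (hWe : ∀ a z, W a z → W (eA a) (eZ z))
    (T : A × Z → A × Z → Prop) (hTeq : Equivalence T)
    (hTd : ∀ u u' v v', T u u' → T v v' →
      T (dA u.1 v.1, dZ u.2 v.2) (dA u'.1 v'.1, dZ u'.2 v'.2))
    (hTe : ∀ u u', T u u' → T (eA u.1, eZ u.2) (eA u'.1, eZ u'.2))
    (a : A) (b c : Z)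
    (hT : T (a, b) (a, c)) (hab : W a b) (hac : W a c) :
    T (zA, b) (zA, c) := by
  have h1 := hTd (a, b) (a, c) (a, zZ) (a, zZ) hT (hTeq.refl _)
  simp only [hA1] at h1
  have h2 := hTe _ _ h1
  have heA : eA zA = zA := by
    have := hA2 zA; rwa [hA1 zA] at this
  simp only [heA, hZ2] at h2
  exact h2
end

section
/- Let X be a set with binary operation d and element 0 such that d(x,0)=x, d(x,x)=0, and d(d(x,z),d(y,z))=d(x,y). Suppose additionally d(x,d(x,y))=y for all x,y. Then x∘y := d(x,d(0,y)) defines an abelian group structure on X with identity 0. -/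
/-- A subtraction with the cocycle identity and `d x (d x y) = y` yields an abelian
group structure `x ∘ y := d x (d 0 y)` with identity `0`. -/
theorem stmt_11 {X : Type*} (d : X → X → X) (zero : X)
    (h1 : ∀ x, d x zero = x) (h2 : ∀ x, d x x = zero)
    (h3 : ∀ x y z, d (d x z) (d y z) = d x y)
    (h4 : ∀ x y, d x (d x y) = y) :
    (∀ x y z, d x (d zero (d y (d zero z))) = d (d x (d zero y)) (d zero z)) ∧
    (∀ x y, d x (d zero y) = d y (d zero x)) ∧
    (∀ x, d x (d zero zero) = x) ∧
    (∀ x, d zero (d zero x) = x) ∧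
    (∀ x, d x (d zero (d zero x)) = zero) := by
  -- n x := d zero x
  have hA : ∀ x y, d zero (d x y) = d y x := by
    intro x y
    have := h3 y x y
    rwa [h2 y] at this
  have hnn : ∀ x, d zero (d zero x) = x := fun x => h4 zero x
  -- B : d (d x y) x = d zero y
  have hB : ∀ x y, d (d x y) x = d zero y := by
    intro x y
    have h : d zero (d (d x y) x) = y := by rw [hA, h4]
    calc d (d x y) x = d zero (d zero (d (d x y) x)) := (hnn _).symm
      _ = d zero y := by rw [h]
  -- cancellation: d p z = d q z → p = q
  have hcancel : ∀ p q z, d p z = d q z → p = q := by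
    intro p q z h
    have h0 : d p q = zero := by rw [← h3 p q z, h, h2]
    calc p = d q (d q p) := (h4 q p).symm
      _ = d q (d zero (d p q)) := by rw [hA]
      _ = d q (d zero zero) := by rw [h0]
      _ = q := by rw [h2, h1]
  -- mul_sub : d (d x (d zero y)) y = x
  have hms : ∀ x y, d (d x (d zero y)) y = x := by
    intro x y
    have h : d (d x (d zero y)) x = d zero (d zero y) := hB x (d zero y)
    have h' : d (d x (d zero y)) x = y := by rw [h, hnn]
    have := h4 (d x (d zero y)) x
    rwa [h'] at this
  -- commutativity
  have hcomm : ∀ x y, d x (d zero y) = d y (d zero x) := by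
    intro x y
    apply hcancel _ _ y
    rw [hms x y]
    have := hB y (d zero x)
    rw [this, hnn]
  -- key associativity step: d (d x z) w = d x (d w (d zero z))
  have hkey : ∀ x z w, d (d x z) w = d x (d w (d zero z)) := by
    intro x z w
    have := h3 x (d w (d zero z)) z
    rwa [hms w z] at this
  refine ⟨?_, hcomm, ?_, hnn, ?_⟩
  · intro x y z
    rw [hA y (d zero z), hkey x (d zero y) (d zero z), hnn]
  · intro x; rw [h2, h1]
  · intro x; rw [hnn, h2]
end

section
/- Let X be a set with a ternary Mal'tsev operation p (i.e. p(x,y,y)=x and p(y,y,x)=x) which is autonomous (i.e. p is a homomorphism X×X×X→X for the structure p itself: p(p(a,b,c),p(a',b',c'),p(a'',b'',c''))=p(p(a,a',a''),p(b,b',b''),p(c,c',c''))). Then for any fixed e∈X, x∘y:=p(x,e,y) defines an abelian group structure on X with identity e. -/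
/-- An autonomous Mal'tsev operation `p` yields, for each `e`, an abelian group
structure `x ∘ y := p x e y` with identity `e`. -/
theorem stmt_13 {X : Type*} (p : X → X → X → X)
    (hm1 : ∀ x y : X, p x y y = x) (hm2 : ∀ x y : X, p y y x = x)
    (haut : ∀ a b c a' b' c' a'' b'' c'' : X,
      p (p a b c) (p a' b' c') (p a'' b'' c'') =
        p (p a a' a'') (p b b' b'') (p c c' c'')) (e : X) :
    (∀ x y z : X, p (p x e y) e z = p x e (p y e z)) ∧
    (∀ x y : X, p x e y = p y e x) ∧
    (∀ x : X, p e e x = x) ∧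
    (∀ x : X, p x e e = x) ∧
    (∀ x : X, ∃ y : X, p x e y = e ∧ p y e x = e) := by
  have comm : ∀ x y : X, p x e y = p y e x := by
    intro x y
    have h := haut e e x e e e y e e
    simpa [hm1, hm2] using h
  refine ⟨?_, comm, fun x => hm2 x e, fun x => hm1 x e, ?_⟩
  · intro x y z
    have h := haut x e y e e e e e z
    simpa [hm1, hm2] using h
  · intro x
    refine ⟨p e x e, ?_, ?_⟩
    · have h := haut x e e e e x e e e
      simpa [hm1, hm2] using h.symm
    · rw [comm]
      have h := haut x e e e e x e e e
      simpa [hm1, hm2] using h.symm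
end
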